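/- arXiv:2003.08304 — 2 statements merged into one kernel-verified Lean document; each statement's English description precedes it below -/
import Mathlib

section
/- Let T_D be shifted exponential with rate λ_d > 0, shift c ≥ 0, independent of h-th order statistics T_N(h) of N i.i.d. shifted exponentials (rate λ_s, shift c). Then for t > c, P(T_D ≥ t, T_D < T_N(h)) = Σ_{j=0}^{h-1} B_{h,j}·λ_d·e^{-H_{h,j}(t-c)}/(U_{h,j}·H_{h,j}), where B_{h,j} = h·binom(N,h)·binom(h-1,j)·(-1)^j, U_{h,j} = N-h+1+j, and H_{h,j} = λ_s·U_{h,j} + λ_d. -/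
open MeasureTheory ProbabilityTheory Real

/-- The shifted exponential distribution with rate `l` and shift `c`:
density `l * exp (-l*(t-c))` for `t > c`, `0` otherwise. -/
noncomputable def shiftedExp (l c : ℝ) : MeasureTheory.Measure ℝ :=
  MeasureTheory.volume.withDensity
    (fun t => ENNReal.ofReal (if c < t then l * Real.exp (-l * (t - c)) else 0))

/-- The `K`-th order statistic (K-th smallest value) of the family `T` evaluated at `ω`. -/
noncomputable def orderStat {Ω : Type*} {N : ℕ} (T : Fin N → Ω → ℝ) (K : ℕ) (ω : Ω) : ℝ :=
  sInf {x : ℝ | K ≤ Nat.card {i : Fin N // T i ω ≤ x}}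

section Aux
open Finset Set
variable {N : ℕ}

noncomputable def cnt (y : Fin N → ℝ) (x : ℝ) : ℕ :=
  (Finset.univ.filter (fun i => y i ≤ x)).card

lemma cnt_mono (y : Fin N → ℝ) {a b : ℝ} (hab : a ≤ b) : cnt y a ≤ cnt y b := by
  apply Finset.card_le_card
  intro i hi
  simp only [Finset.mem_filter] at *
  exact ⟨hi.1, hi.2.trans hab⟩

lemma lt_sInf_iff_cnt_lt {h : ℕ} (hh : 1 ≤ h) (hhN : h ≤ N) (y : Fin N → ℝ) (x : ℝ) :
    x < sInf {z : ℝ | h ≤ Nat.card {i : Fin N // y i ≤ z}} ↔ cnt y x < h := by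
  have hN : 0 < N := lt_of_lt_of_le hh hhN
  have hcard : ∀ z : ℝ, Nat.card {i : Fin N // y i ≤ z} = cnt y z := by
    intro z
    rw [Nat.card_eq_fintype_card, Fintype.card_subtype]
    rfl
  have hAeq : {z : ℝ | h ≤ Nat.card {i : Fin N // y i ≤ z}} = {z : ℝ | h ≤ cnt y z} := by
    ext z; simp only [Set.mem_setOf_eq, hcard]
  rw [hAeq]
  set A : Set ℝ := {z : ℝ | h ≤ cnt y z} with hA
  haveI : Nonempty (Fin N) := ⟨⟨0, hN⟩⟩
  have huniv : (Finset.univ : Finset (Fin N)).Nonempty := Finset.univ_nonempty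
  have hne : A.Nonempty := by
    refine ⟨Finset.univ.sup' huniv y, ?_⟩
    have : Finset.univ.filter (fun i => y i ≤ Finset.univ.sup' huniv y) = Finset.univ := by
      apply Finset.filter_true_of_mem
      intro i _
      exact Finset.le_sup' y (Finset.mem_univ i)
    simp only [hA, Set.mem_setOf_eq, cnt, this, Finset.card_univ, Fintype.card_fin]
    exact hhN
  have hbdd : BddBelow A := by
    refine ⟨Finset.univ.inf' huniv y, ?_⟩
    intro z hz
    have h1 : 1 ≤ cnt y z := le_trans hh hz
    have : (Finset.univ.filter (fun i => y i ≤ z)).Nonempty := by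
      rw [← Finset.card_pos]; exact h1
    obtain ⟨i, hi⟩ := this
    simp only [Finset.mem_filter] at hi
    exact le_trans (Finset.inf'_le y (Finset.mem_univ i)) hi.2
  constructor
  · intro hx
    by_contra hcon
    push_neg at hcon
    exact absurd (csInf_le hbdd hcon) (not_le.mpr hx)
  · intro hx
    have hmem : sInf A ∈ A := by
      by_contra hcon
      simp only [hA, Set.mem_setOf_eq, not_le] at hcon
      set a := sInf A
      set s := Finset.univ.filter (fun i => a < y i) with hs
      have hsne : s.Nonempty := by
        rw [← Finset.card_pos]
        by_contra hz
        push_neg at hz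
        interval_cases h' : s.card
        · have : Finset.univ.filter (fun i => y i ≤ a) = Finset.univ := by
            apply Finset.filter_true_of_mem
            intro i _
            by_contra hyi
            have : i ∈ s := by simp [hs, lt_of_not_ge hyi]
            simp [Finset.card_eq_zero.mp h'] at this
          have : cnt y a = N := by simp [cnt, this]
          omega
      set b := s.inf' hsne y with hb
      have hab : a < b := by
        rw [Finset.lt_inf'_iff]
        intro i hi
        simp only [hs, Finset.mem_filter] at hi
        exact hi.2
      have hba : b ≤ a := by
        apply le_csInf hne
        intro z hz
        by_contra hzb
        push_neg at hzb
        have hsub : Finset.univ.filter (fun i => y i ≤ z) ⊆ Finset.univ.filter (fun i => y i ≤ a) := by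
          intro i hi
          simp only [Finset.mem_filter] at *
          refine ⟨hi.1, ?_⟩
          by_contra hya
          have his : i ∈ s := by
            exact Finset.mem_filter.mpr ⟨Finset.mem_univ i, lt_of_not_ge hya⟩
          have := Finset.inf'_le y his
          linarith [hi.2]
        have h4 : cnt y z ≤ cnt y a := Finset.card_le_card hsub
        have h5 : h ≤ cnt y z := hz
        omega
      linarith
    by_contra hcon
    push_neg at hcon
    have h2 : cnt y (sInf A) ≤ cnt y x := cnt_mono y hcon
    have h3 : h ≤ cnt y (sInf A) := hmem
    omega

lemma integrableOn_exp_shift {a : ℝ} (ha : 0 < a) (c b : ℝ) :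
    IntegrableOn (fun x => Real.exp (-(a * (x - c)))) (Ioi b) := by
  have h1 : IntegrableOn (fun x => Real.exp (-a * x)) (Ioi b) := exp_neg_integrableOn_Ioi b ha
  have h2 : IntegrableOn (fun x => Real.exp (a * c) * Real.exp (-a * x)) (Ioi b) :=
    h1.const_mul (Real.exp (a * c))
  apply h2.congr_fun ?_ measurableSet_Ioi
  intro x _
  show Real.exp (a * c) * Real.exp (-a * x) = Real.exp (-(a * (x - c)))
  rw [← Real.exp_add]
  ring_nf

lemma integral_exp_shift_Ioi {a : ℝ} (ha : 0 < a) (c b : ℝ) :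
    ∫ x in Ioi b, Real.exp (-(a * (x - c))) = Real.exp (-(a * (b - c))) / a := by
  have hderiv : ∀ x ∈ Ici b, HasDerivAt (fun x => -Real.exp (-(a * (x - c))) / a)
      (Real.exp (-(a * (x - c)))) x := by
    intro x _
    have h1 : HasDerivAt (fun x : ℝ => -(a * (x - c))) (-a) x := by
      have h0 : HasDerivAt (fun x : ℝ => x - c) 1 x := (hasDerivAt_id x).sub_const c
      exact (h0.const_mul a).neg.congr_deriv (by ring)
    have h2 := (h1.exp).neg.div_const a
    refine h2.congr_deriv ?_
    field_simp
  have htend : Filter.Tendsto (fun x => -Real.exp (-(a * (x - c))) / a) Filter.atTop (nhds 0) := by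
    have h3 : Filter.Tendsto (fun x : ℝ => -(a * (x - c))) Filter.atTop Filter.atBot := by
      apply Filter.tendsto_neg_atBot_iff.mpr
      have := (Filter.tendsto_atTop_add_const_right Filter.atTop (-c) Filter.tendsto_id).const_mul_atTop ha
      simpa [sub_eq_add_neg] using this
    have h4 := Real.tendsto_exp_atBot.comp h3
    have h5 := (h4.neg).div_const a
    simpa using h5
  have := MeasureTheory.integral_Ioi_of_hasDerivAt_of_tendsto' hderiv
    (integrableOn_exp_shift ha c b) htend
  rw [this]; ring

lemma shiftedExp_Ioi {l : ℝ} (hl : 0 < l) {c b : ℝ} (hcb : c ≤ b) :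
    shiftedExp l c (Ioi b) = ENNReal.ofReal (Real.exp (-(l * (b - c)))) := by
  rw [shiftedExp, withDensity_apply _ measurableSet_Ioi]
  have heq : ∀ x ∈ Ioi b, ENNReal.ofReal (if c < x then l * Real.exp (-l * (x - c)) else 0)
      = ENNReal.ofReal (l * Real.exp (-(l * (x - c)))) := by
    intro x hx
    rw [if_pos (lt_of_le_of_lt hcb hx)]
    ring_nf
  rw [setLIntegral_congr_fun measurableSet_Ioi heq]
  rw [← MeasureTheory.ofReal_integral_eq_lintegral_ofReal]
  · rw [MeasureTheory.integral_const_mul, integral_exp_shift_Ioi hl]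
    congr 1
    field_simp
  · exact (integrableOn_exp_shift hl c b).const_mul l
  · filter_upwards with x
    positivity

lemma shiftedExp_univ {l : ℝ} (hl : 0 < l) (c : ℝ) : shiftedExp l c Set.univ = 1 := by
  have : (Set.univ : Set ℝ) = Iic c ∪ Ioi c := by
    ext x; simp [le_or_gt]
  rw [this, measure_union (Set.Iic_disjoint_Ioi le_rfl) measurableSet_Ioi]
  have h0 : shiftedExp l c (Iic c) = 0 := by
    rw [shiftedExp, withDensity_apply _ measurableSet_Iic]
    have heq : ∀ x ∈ Iic c, ENNReal.ofReal (if c < x then l * Real.exp (-l * (x - c)) else 0) = 0 := by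
      intro x hx
      rw [if_neg (not_lt.mpr hx)]
      simp
    rw [setLIntegral_congr_fun measurableSet_Iic heq]
    simp
  rw [h0, shiftedExp_Ioi hl le_rfl]
  simp

theorem shiftedExp_isProb {l c : ℝ} (hl : 0 < l) : IsProbabilityMeasure (shiftedExp l c) :=
  ⟨shiftedExp_univ hl c⟩

lemma shiftedExp_Iic {l : ℝ} (hl : 0 < l) {c b : ℝ} (hcb : c ≤ b) :
    shiftedExp l c (Iic b) = ENNReal.ofReal (1 - Real.exp (-(l * (b - c)))) := by
  haveI := shiftedExp_isProb (c := c) hl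
  have hcompl : Iic b = (Ioi b)ᶜ := by simp
  rw [hcompl, measure_compl measurableSet_Ioi (measure_ne_top _ _), measure_univ,
    shiftedExp_Ioi hl hcb]
  rw [← ENNReal.ofReal_one, ← ENNReal.ofReal_sub _ (Real.exp_nonneg _)]



lemma measurable_cnt : Measurable (fun p : ℝ × (Fin N → ℝ) => cnt p.2 p.1) := by
  have : (fun p : ℝ × (Fin N → ℝ) => cnt p.2 p.1)
      = fun p => ∑ i : Fin N, if p.2 i ≤ p.1 then 1 else 0 := by
    funext p
    rw [cnt, Finset.card_filter]
  rw [this]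
  apply Finset.measurable_sum
  intro i _
  apply Measurable.ite ?_ measurable_const measurable_const
  exact measurableSet_le (measurable_snd.eval) measurable_fst

lemma pi_cnt_lt (h : ℕ) (ν : Measure ℝ) [IsProbabilityMeasure ν] (x : ℝ) :
    Measure.pi (fun _ : Fin N => ν) {y | cnt y x < h}
    = ∑ k ∈ Finset.range h, (N.choose k) * (ν (Iic x))^k * (ν (Ioi x))^(N - k) := by
  classical
  set A : Finset (Fin N) → Set (Fin N → ℝ) :=
    fun s => Set.pi Set.univ (fun i => if i ∈ s then Iic x else Ioi x) with hA
  have hsetEq : {y : Fin N → ℝ | cnt y x < h}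
      = ⋃ s ∈ (Finset.univ : Finset (Finset (Fin N))).filter (fun s => s.card < h), A s := by
    ext y
    simp only [Set.mem_setOf_eq, Set.mem_iUnion, Finset.mem_filter, Finset.mem_univ, true_and]
    constructor
    · intro hy
      refine ⟨Finset.univ.filter (fun i => y i ≤ x), hy, ?_⟩
      intro i _
      by_cases hyi : y i ≤ x
      · simp [hyi]
      · simp [hyi, lt_of_not_ge hyi]
    · rintro ⟨s, hs, hmem⟩
      have : Finset.univ.filter (fun i => y i ≤ x) = s := by
        ext i
        simp only [Finset.mem_filter, Finset.mem_univ, true_and]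
        have := hmem i (Set.mem_univ i)
        by_cases hi : i ∈ s
        · simp only [hi, if_pos] at this
          exact ⟨fun _ => hi, fun _ => this⟩
        · simp only [hi, if_neg, not_false_iff] at this
          simp only [Set.mem_Ioi] at this
          exact ⟨fun hc => absurd hc (not_le.mpr this), fun hc => absurd hc hi⟩
      rw [cnt, this]; exact hs
  have hAmeas : ∀ s : Finset (Fin N), MeasurableSet (A s) := by
    intro s
    apply MeasurableSet.univ_pi
    intro i
    by_cases hi : i ∈ s <;> simp [hi, measurableSet_Iic, measurableSet_Ioi]
  have hdisj : (((Finset.univ : Finset (Finset (Fin N))).filter (fun s => s.card < h)) : Set (Finset (Fin N))).PairwiseDisjoint A := by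
    intro s _ u _ hsu
    apply Set.disjoint_left.mpr
    intro y hys hyu
    apply hsu
    ext i
    have h1 := hys i (Set.mem_univ i)
    have h2 := hyu i (Set.mem_univ i)
    constructor
    · intro hi
      by_contra hiu
      simp only [hi, if_pos] at h1
      simp only [hiu, if_neg, not_false_iff] at h2
      simp only [Set.mem_Iic] at h1
      simp only [Set.mem_Ioi] at h2
      linarith
    · intro hi
      by_contra hiu
      simp only [hi, if_pos] at h2
      simp only [hiu, if_neg, not_false_iff] at h1
      simp only [Set.mem_Iic] at h2
      simp only [Set.mem_Ioi] at h1
      linarith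
  rw [hsetEq, measure_biUnion_finset hdisj (fun s _ => hAmeas s)]
  have hAval : ∀ s : Finset (Fin N), Measure.pi (fun _ : Fin N => ν) (A s)
      = (ν (Iic x))^s.card * (ν (Ioi x))^(N - s.card) := by
    intro s
    rw [hA]
    rw [Measure.pi_pi]
    simp only [apply_ite ν]
    rw [Finset.prod_ite]
    have h1 : Finset.univ.filter (fun i : Fin N => i ∈ s) = s := by ext i; simp
    have h2 : Finset.univ.filter (fun i : Fin N => ¬ i ∈ s) = sᶜ := by ext i; simp
    rw [h1, h2, Finset.prod_const, Finset.prod_const, Finset.card_compl, Fintype.card_fin]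
  have hre : (Finset.univ : Finset (Finset (Fin N))).filter (fun s => s.card < h)
      = (Finset.range h).biUnion (fun k => Finset.powersetCard k Finset.univ) := by
    ext s
    simp only [Finset.mem_filter, Finset.mem_univ, true_and, Finset.mem_biUnion,
      Finset.mem_range, Finset.mem_powersetCard]
    constructor
    · intro hs; exact ⟨s.card, hs, Finset.subset_univ s, rfl⟩
    · rintro ⟨k, hk, _, rfl⟩; exact hk
  rw [hre, Finset.sum_biUnion]
  · apply Finset.sum_congr rfl
    intro k _
    rw [Finset.sum_congr rfl (fun s hs => by
      rw [hAval s, (Finset.mem_powersetCard.mp hs).2])]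
    rw [Finset.sum_const, Finset.card_powersetCard, Finset.card_univ, Fintype.card_fin,
      nsmul_eq_mul, mul_assoc]
  · intro k hk m hm hkm
    apply Finset.disjoint_left.mpr
    intro s hsk hsm
    apply hkm
    rw [← (Finset.mem_powersetCard.mp hsk).2, ← (Finset.mem_powersetCard.mp hsm).2]

lemma binom_sub_pow (m : ℕ) (q : ℝ) :
    (1 - q)^m = ∑ j ∈ Finset.range (m+1), (m.choose j : ℝ) * (-1)^j * q^j := by
  have := add_pow (-q) 1 m
  rw [neg_add_eq_sub] at this
  rw [this]
  apply Finset.sum_congr rfl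
  intro j _
  rw [one_pow, neg_pow]
  ring

lemma key_identity (N h : ℕ) (hh : 1 ≤ h) (hhN : h ≤ N) (q : ℝ) :
    ∑ k ∈ Finset.range h, (N.choose k : ℝ) * (1-q)^k * q^(N-k)
    = ∑ j ∈ Finset.range h,
        ((h : ℝ) * (N.choose h : ℝ) * ((h-1).choose j : ℝ) * (-1)^j)
          * q^(N-h+1+j) / ((N-h+1+j : ℕ) : ℝ) := by
  set f : ℝ → ℝ := fun q => ∑ k ∈ Finset.range h, (N.choose k : ℝ) * (1-q)^k * q^(N-k)
    - ∑ j ∈ Finset.range h,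
        ((h : ℝ) * (N.choose h : ℝ) * ((h-1).choose j : ℝ) * (-1)^j)
          * q^(N-h+1+j) / ((N-h+1+j : ℕ) : ℝ) with hf
  have hderiv : ∀ x : ℝ, HasDerivAt f 0 x := by
    intro x
    have hL : HasDerivAt (fun q : ℝ => ∑ k ∈ Finset.range h, (N.choose k : ℝ) * (1-q)^k * q^(N-k))
        ((h : ℝ) * (N.choose h : ℝ) * (1-x)^(h-1) * x^(N-h)) x := by
      have hterm : ∀ k ∈ Finset.range h,
          HasDerivAt (fun q : ℝ => (N.choose k : ℝ) * (1-q)^k * q^(N-k))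
            ((((k+1) * (N.choose (k+1)) : ℕ) : ℝ) * (1-x)^k * x^(N-(k+1))
              - (((k * (N.choose k) : ℕ) : ℝ) * (1-x)^(k-1) * x^(N-k))) x := by
        intro k hk
        have hkN : k < N := lt_of_lt_of_le (Finset.mem_range.mp hk) hhN
        have h1 : HasDerivAt (fun q : ℝ => (1-q)^k) (-((k : ℝ) * (1-x)^(k-1))) x := by
          have h0 : HasDerivAt (fun q : ℝ => 1 - q) (-1) x := by
            simpa using (hasDerivAt_id x).const_sub 1
          have := (hasDerivAt_pow k (1-x)).comp x h0
          refine this.congr_deriv ?_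
          ring
        have h2 : HasDerivAt (fun q : ℝ => q^(N-k)) (((N-k : ℕ) : ℝ) * x^(N-k-1)) x := by
          simpa using hasDerivAt_pow (N-k) x
        have h3 := (h1.const_mul (N.choose k : ℝ)).mul h2
        refine h3.congr_deriv ?_
        have hc : ((k+1) * (N.choose (k+1)) : ℕ) = ((N.choose k) * (N - k) : ℕ) := by
          rw [mul_comm]
          exact Nat.choose_succ_right_eq N k
        have he1 : N - (k+1) = N - k - 1 := by omega
        have he2 : ((N - k : ℕ) : ℝ) = (N : ℝ) - k := by
          push_cast [Nat.cast_sub (le_of_lt hkN)]; ring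
        rw [hc, he1]
        push_cast [Nat.cast_sub (le_of_lt hkN)]
        ring
      have hsum := HasDerivAt.fun_sum hterm
      refine hsum.congr_deriv ?_
      have htel := Finset.sum_range_sub (fun k => ((k * (N.choose k) : ℕ) : ℝ) * (1-x)^(k-1) * x^(N-k)) h
      simp only [Nat.add_sub_cancel] at htel
      rw [htel]
      push_cast
      ring
    have hR : HasDerivAt (fun q : ℝ => ∑ j ∈ Finset.range h,
        ((h : ℝ) * (N.choose h : ℝ) * ((h-1).choose j : ℝ) * (-1)^j)
          * q^(N-h+1+j) / ((N-h+1+j : ℕ) : ℝ))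
        ((h : ℝ) * (N.choose h : ℝ) * (1-x)^(h-1) * x^(N-h)) x := by
      have hterm : ∀ j ∈ Finset.range h,
          HasDerivAt (fun q : ℝ => ((h : ℝ) * (N.choose h : ℝ) * ((h-1).choose j : ℝ) * (-1)^j)
            * q^(N-h+1+j) / ((N-h+1+j : ℕ) : ℝ))
            (((h : ℝ) * (N.choose h : ℝ) * ((h-1).choose j : ℝ) * (-1)^j) * x^(N-h+j)) x := by
        intro j hj
        have h2 : HasDerivAt (fun q : ℝ => q^(N-h+1+j)) (((N-h+1+j : ℕ) : ℝ) * x^(N-h+1+j-1)) x := by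
          simpa using hasDerivAt_pow (N-h+1+j) x
        have h3 := (h2.const_mul ((h : ℝ) * (N.choose h : ℝ) * ((h-1).choose j : ℝ) * (-1)^j)).div_const ((N-h+1+j : ℕ) : ℝ)
        refine h3.congr_deriv ?_
        have hUne : ((N-h+1+j : ℕ) : ℝ) ≠ 0 := Nat.cast_ne_zero.mpr (by omega)
        have he : N-h+1+j-1 = N-h+j := by omega
        rw [he, mul_comm ((N-h+1+j : ℕ) : ℝ) (x^(N-h+j)), ← mul_assoc,
          mul_div_cancel_right₀ _ hUne]
      have hsum := HasDerivAt.fun_sum hterm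
      refine hsum.congr_deriv ?_
      have hbp := binom_sub_pow (h-1) x
      have hh1 : h - 1 + 1 = h := Nat.succ_pred_eq_of_pos hh
      rw [hh1] at hbp
      have hcon : ∀ j ∈ Finset.range h,
          ((h:ℝ)*(N.choose h:ℝ)*((h-1).choose j:ℝ)*(-1)^j) * x^(N-h+j)
          = (h:ℝ)*(N.choose h:ℝ) * (((h-1).choose j : ℝ) * (-1)^j * x^j) * x^(N-h) := by
        intro j _; rw [pow_add]; ring
      rw [Finset.sum_congr rfl hcon, ← Finset.sum_mul, ← Finset.mul_sum, ← hbp]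
    have hsub := hL.sub hR
    rw [sub_self] at hsub
    exact hsub
  have hconst : f q = f 0 := by
    apply is_const_of_deriv_eq_zero
    · intro x; exact (hderiv x).differentiableAt
    · intro x; exact (hderiv x).deriv
  have hf0 : f 0 = 0 := by
    rw [hf]
    simp only
    rw [Finset.sum_eq_zero, Finset.sum_eq_zero, sub_zero]
    · intro j hj
      rw [zero_pow (by omega : N-h+1+j ≠ 0)]
      simp
    · intro k hk
      have : k < N := lt_of_lt_of_le (Finset.mem_range.mp hk) hhN
      rw [zero_pow (by omega : N-k ≠ 0)]
      simp
  have : f q = 0 := hconst.trans hf0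
  rw [hf] at this
  simp only at this
  linarith [this]
end Aux

theorem prob_random_deadline_tail_and_lt_orderStat
    {Ω : Type*} [MeasurableSpace Ω] (P : MeasureTheory.Measure Ω) [IsProbabilityMeasure P]
    (N h : ℕ) (hh : 1 ≤ h) (hhN : h ≤ N)
    (ls ld c t : ℝ) (hls : 0 < ls) (hld : 0 < ld) (hc : 0 ≤ c) (ht : c < t)
    (T : Fin N → Ω → ℝ) (hT : ∀ i, Measurable (T i))
    (D : Ω → ℝ) (hD : Measurable D)
    (hlaw : MeasureTheory.Measure.map (fun ω => (D ω, fun i => T i ω)) P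
      = (shiftedExp ld c).prod (MeasureTheory.Measure.pi (fun _ : Fin N => shiftedExp ls c))) :
    (P {ω | t ≤ D ω ∧ D ω < orderStat T h ω}).toReal
      = ∑ j ∈ Finset.range h,
          ((h : ℝ) * (N.choose h : ℝ) * ((h - 1).choose j : ℝ) * (-1) ^ j)
            * ld * Real.exp (-(ls * ((N : ℝ) - h + 1 + j) + ld) * (t - c))
            / (((N : ℝ) - h + 1 + j) * (ls * ((N : ℝ) - h + 1 + j) + ld)) := by
  classical
  haveI instνs : IsProbabilityMeasure (shiftedExp ls c) := shiftedExp_isProb hls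
  haveI instνd : IsProbabilityMeasure (shiftedExp ld c) := shiftedExp_isProb hld
  set νpi := MeasureTheory.Measure.pi (fun _ : Fin N => shiftedExp ls c) with hνpi
  haveI : IsProbabilityMeasure νpi := by rw [hνpi]; infer_instance
  set S : Set (ℝ × (Fin N → ℝ)) := {p | t ≤ p.1 ∧ cnt p.2 p.1 < h} with hS
  have hSmeas : MeasurableSet S := by
    rw [hS, Set.setOf_and]
    exact (measurableSet_le measurable_const measurable_fst).inter
      (measurable_cnt (measurableSet_Iio (a := h)))
  have hmap : Measurable (fun ω => (D ω, fun i => T i ω)) :=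
    hD.prodMk (measurable_pi_lambda _ hT)
  -- Step 1: reduce to the product measure
  have hpre : {ω | t ≤ D ω ∧ D ω < orderStat T h ω} = (fun ω => (D ω, fun i => T i ω)) ⁻¹' S := by
    ext ω
    simp only [Set.mem_setOf_eq, Set.mem_preimage, orderStat, hS]
    exact and_congr_right (fun _ => lt_sInf_iff_cnt_lt hh hhN _ _)
  have hPS : P {ω | t ≤ D ω ∧ D ω < orderStat T h ω} = ((shiftedExp ld c).prod νpi) S := by
    rw [hpre, ← Measure.map_apply hmap hSmeas, hlaw]
  rw [hPS]
  -- Step 2: Fubini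
  rw [Measure.prod_apply hSmeas]
  -- the real integrand, in two forms
  set F : ℝ → ℝ := fun x => ld * Real.exp (-(ld * (x - c)))
    * ∑ k ∈ Finset.range h, (N.choose k : ℝ)
        * (1 - Real.exp (-(ls * (x - c))))^k * (Real.exp (-(ls * (x - c))))^(N-k) with hF
  set F2 : ℝ → ℝ := fun x => ∑ j ∈ Finset.range h,
      (((h : ℝ) * (N.choose h : ℝ) * ((h-1).choose j : ℝ) * (-1)^j) / ((N-h+1+j : ℕ) : ℝ))
        * (ld * Real.exp (-((ls * ((N-h+1+j : ℕ) : ℝ) + ld) * (x - c)))) with hF2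
  have hU0 : ∀ j : ℕ, ((N-h+1+j : ℕ) : ℝ) ≠ 0 := fun j => Nat.cast_ne_zero.mpr (by omega)
  have hUpos : ∀ j : ℕ, (0:ℝ) < ((N-h+1+j : ℕ) : ℝ) := by
    intro j
    exact_mod_cast Nat.pos_of_ne_zero (by omega)
  have hHpos : ∀ j : ℕ, 0 < ls * ((N-h+1+j : ℕ) : ℝ) + ld := by
    intro j
    have := hUpos j
    positivity
  have hF12 : ∀ x, F x = F2 x := by
    intro x
    rw [hF, hF2]
    simp only
    rw [key_identity N h hh hhN, Finset.mul_sum]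
    apply Finset.sum_congr rfl
    intro j _
    rw [← Real.exp_nat_mul]
    rw [show -((ls * ((N-h+1+j : ℕ) : ℝ) + ld) * (x - c))
        = ((N-h+1+j : ℕ) : ℝ) * -(ls * (x - c)) + (-(ld * (x - c))) from by ring,
      Real.exp_add]
    field_simp
  have hFnonneg : ∀ x, t ≤ x → 0 ≤ F x := by
    intro x hx
    rw [hF]
    simp only
    have hq0 : 0 < Real.exp (-(ls * (x - c))) := Real.exp_pos _
    have hq1 : Real.exp (-(ls * (x - c))) ≤ 1 := by
      rw [Real.exp_le_one_iff]
      nlinarith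
    apply mul_nonneg (by positivity)
    apply Finset.sum_nonneg
    intro k _
    have : (0:ℝ) ≤ 1 - Real.exp (-(ls * (x - c))) := by linarith
    positivity
  -- Step 3: identify the fibers
  have hfiber : ∀ x : ℝ, νpi (Prod.mk x ⁻¹' S)
      = Set.indicator (Set.Ici t) (fun x => νpi {y : Fin N → ℝ | cnt y x < h}) x := by
    intro x
    by_cases hx : t ≤ x
    · have hx' : x ∈ Set.Ici t := hx
      rw [Set.indicator_of_mem hx']
      congr 1
      ext y
      simp only [hS, Set.mem_preimage, Set.mem_setOf_eq, hx, true_and]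
    · have hx' : x ∉ Set.Ici t := hx
      rw [Set.indicator_of_notMem hx']
      have : Prod.mk x ⁻¹' S = ∅ := by
        ext y
        simp only [hS, Set.mem_preimage, Set.mem_setOf_eq, Set.mem_empty_iff_false, iff_false]
        intro hcon
        exact hx hcon.1
      rw [this, measure_empty]
  rw [lintegral_congr hfiber, lintegral_indicator measurableSet_Ici]
  -- Step 4: compute the fiber measures for x ≥ t
  have hfval : ∀ x ∈ Set.Ici t, νpi {y : Fin N → ℝ | cnt y x < h}
      = ENNReal.ofReal (∑ k ∈ Finset.range h, (N.choose k : ℝ)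
          * (1 - Real.exp (-(ls * (x - c))))^k * (Real.exp (-(ls * (x - c))))^(N-k)) := by
    intro x hx
    have hcx : c ≤ x := le_trans (le_of_lt ht) hx
    rw [hνpi, pi_cnt_lt h (shiftedExp ls c) x]
    rw [ENNReal.ofReal_sum_of_nonneg]
    · apply Finset.sum_congr rfl
      intro k _
      rw [shiftedExp_Iic hls hcx, shiftedExp_Ioi hls hcx]
      have hq1 : Real.exp (-(ls * (x - c))) ≤ 1 := by
        rw [Real.exp_le_one_iff]
        nlinarith [le_trans (le_of_lt ht) hx]
      rw [← ENNReal.ofReal_pow (by linarith), ← ENNReal.ofReal_pow (Real.exp_nonneg _),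
        ← ENNReal.ofReal_natCast, ← ENNReal.ofReal_mul (Nat.cast_nonneg _),
        ← ENNReal.ofReal_mul (mul_nonneg (Nat.cast_nonneg _) (pow_nonneg (by linarith) k))]
    · intro k _
      have hq1 : Real.exp (-(ls * (x - c))) ≤ 1 := by
        rw [Real.exp_le_one_iff]
        nlinarith [le_trans (le_of_lt ht) hx]
      have : (0:ℝ) ≤ 1 - Real.exp (-(ls * (x - c))) := by linarith
      positivity
  rw [setLIntegral_congr_fun measurableSet_Ici hfval]
  -- Step 5: unfold the withDensity
  rw [shiftedExp, setLIntegral_withDensity_eq_setLIntegral_mul _ ?hd ?hg measurableSet_Ici]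
  case hd =>
    apply Measurable.ennreal_ofReal
    apply Measurable.ite measurableSet_Ioi ?_ measurable_const
    exact (measurable_const.mul ((((measurable_id.sub measurable_const).const_mul (-ld)).exp)))
  case hg =>
    apply Measurable.ennreal_ofReal
    apply Finset.measurable_sum
    intro k _
    have hm : Measurable fun x : ℝ => Real.exp (-(ls * (x - c))) :=
      (((measurable_id.sub measurable_const).const_mul ls).neg).exp
    exact ((measurable_const.sub hm).pow_const k).const_mul _ |>.mul (hm.pow_const _)
  -- Step 6: pass to a real integral
  have hpt : ∀ x ∈ Set.Ici t,
      ((fun t => ENNReal.ofReal (if c < t then ld * Real.exp (-ld * (t - c)) else 0))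
        * (fun x => ENNReal.ofReal (∑ k ∈ Finset.range h, (N.choose k : ℝ)
          * (1 - Real.exp (-(ls * (x - c))))^k * (Real.exp (-(ls * (x - c))))^(N-k)))) x
      = ENNReal.ofReal (F x) := by
    intro x hx
    simp only [Pi.mul_apply]
    have hq1 : Real.exp (-(ls * (x - c))) ≤ 1 := by
      rw [Real.exp_le_one_iff]
      nlinarith [le_trans (le_of_lt ht) hx]
    have hGnn : (0:ℝ) ≤ ∑ k ∈ Finset.range h, (N.choose k : ℝ)
        * (1 - Real.exp (-(ls * (x - c))))^k * (Real.exp (-(ls * (x - c))))^(N-k) := by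
      apply Finset.sum_nonneg
      intro k _
      have h1 : (0:ℝ) ≤ 1 - Real.exp (-(ls * (x - c))) := by linarith
      positivity
    rw [if_pos (lt_of_lt_of_le ht hx), ← ENNReal.ofReal_mul (by positivity), hF]
    congr 1
    simp only [neg_mul]
  rw [setLIntegral_congr_fun measurableSet_Ici hpt]
  have hFeq : F = F2 := funext hF12
  have hFint2 : ∀ j : ℕ, IntegrableOn
      (fun x => (((h : ℝ) * (N.choose h : ℝ) * ((h-1).choose j : ℝ) * (-1)^j) / ((N-h+1+j : ℕ) : ℝ))
        * (ld * Real.exp (-((ls * ((N-h+1+j : ℕ) : ℝ) + ld) * (x - c))))) (Set.Ioi t) := by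
    intro j
    have := (integrableOn_exp_shift (hHpos j) c t).const_mul
      ((((h : ℝ) * (N.choose h : ℝ) * ((h-1).choose j : ℝ) * (-1)^j) / ((N-h+1+j : ℕ) : ℝ)) * ld)
    apply IntegrableOn.congr_fun this ?_ measurableSet_Ioi
    intro x _
    show _ = _
    ring
  have hFintIoi : IntegrableOn F (Set.Ioi t) := by
    rw [hFeq, hF2]
    exact MeasureTheory.integrable_finset_sum _ (fun j _ => hFint2 j)
  have hFint : IntegrableOn F (Set.Ici t) := by
    rw [integrableOn_Ici_iff_integrableOn_Ioi]
    exact hFintIoi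
  rw [ofReal_integral_eq_lintegral_ofReal hFint
    ((ae_restrict_iff' measurableSet_Ici).mpr (Filter.Eventually.of_forall hFnonneg)) |>.symm]
  have hintval : ∫ x in Set.Ici t, F x
      = ∑ j ∈ Finset.range h,
          (((h : ℝ) * (N.choose h : ℝ) * ((h-1).choose j : ℝ) * (-1)^j) / ((N-h+1+j : ℕ) : ℝ))
            * (ld * (Real.exp (-((ls * ((N-h+1+j : ℕ) : ℝ) + ld) * (t - c)))
              / (ls * ((N-h+1+j : ℕ) : ℝ) + ld))) := by
    rw [MeasureTheory.integral_Ici_eq_integral_Ioi, hFeq, hF2]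
    rw [MeasureTheory.integral_finset_sum _ (fun j _ => hFint2 j)]
    apply Finset.sum_congr rfl
    intro j _
    rw [MeasureTheory.integral_const_mul, MeasureTheory.integral_const_mul,
      integral_exp_shift_Ioi (hHpos j)]
  have hnn : 0 ≤ ∫ x in Set.Ici t, F x :=
    MeasureTheory.setIntegral_nonneg measurableSet_Ici hFnonneg
  rw [ENNReal.toReal_ofReal hnn, hintval]
  apply Finset.sum_congr rfl
  intro j hj
  have hcast : ((N-h+1+j : ℕ) : ℝ) = (N : ℝ) - h + 1 + j := by
    push_cast [Nat.cast_sub hhN]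
    ring
  rw [hcast]
  rw [show -((ls * ((N:ℝ) - h + 1 + j) + ld) * (t - c))
      = -(ls * ((N:ℝ) - h + 1 + j) + ld) * (t - c) from (neg_mul _ _).symm]
  have hU : ((N:ℝ) - h + 1 + j) ≠ 0 := by rw [← hcast]; exact hU0 j
  have hH : (ls * ((N:ℝ) - h + 1 + j) + ld) ≠ 0 := by rw [← hcast]; exact ne_of_gt (hHpos j)
  field_simp
end

section
/- Let T₁,...,T_N be i.i.d. continuous random variables with order statistics T_N(1) < ... < T_N(N), let T_n be one of them, and let T_D be an independent continuous random variable. Given that device n succeeds (T_n ≤ min{T_D, T_N(K)}), the conditional probability that K receptions happen before the deadline is P(T_N(K) < T_D | T_n ≤ min{T_D, T_N(K)}) = K·R_K / Σ_{h=1}^K R_h, where R_h = P(T_N(h) ≤ T_D). -/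
open MeasureTheory ProbabilityTheory Real

namespace OSAux

variable {N : ℕ}

/-- Order statistic of a vector. -/
noncomputable def F (K : ℕ) (v : Fin N → ℝ) : ℝ :=
  orderStat (fun i (w : Fin N → ℝ) => w i) K v

/-- Rank of coordinate `n` in vector `v`. -/
noncomputable def rnk (v : Fin N → ℝ) (n : Fin N) : ℕ :=
  (Finset.univ.filter fun i => v i ≤ v n).card

lemma card_subtype (v : Fin N → ℝ) (x : ℝ) :
    Nat.card {i : Fin N // v i ≤ x} = (Finset.univ.filter fun i => v i ≤ x).card := by
  rw [Nat.card_eq_fintype_card, Fintype.card_subtype]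

lemma F_def (K : ℕ) (v : Fin N → ℝ) :
    F K v = sInf {x : ℝ | K ≤ (Finset.univ.filter fun i => v i ≤ x).card} := by
  simp only [F, orderStat, card_subtype]

lemma cardLe_mono (v : Fin N → ℝ) {x y : ℝ} (hxy : x ≤ y) :
    (Finset.univ.filter fun i => v i ≤ x).card ≤ (Finset.univ.filter fun i => v i ≤ y).card := by
  apply Finset.card_le_card
  intro i hi
  simp only [Finset.mem_filter, Finset.mem_univ, true_and] at hi ⊢
  exact hi.trans hxy

variable {K : ℕ}

lemma sInf_mem_S (hK : 1 ≤ K) (hKN : K ≤ N) (v : Fin N → ℝ) :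
    K ≤ (Finset.univ.filter fun i => v i ≤ F K v).card ∧
      ∀ x, K ≤ (Finset.univ.filter fun i => v i ≤ x).card → F K v ≤ x := by
  have hN : 0 < N := lt_of_lt_of_le hK hKN
  haveI : Nonempty (Fin N) := ⟨⟨0, hN⟩⟩
  set S : Set ℝ := {x : ℝ | K ≤ (Finset.univ.filter fun i => v i ≤ x).card} with hS
  -- S is nonempty
  have hne : S.Nonempty := by
    refine ⟨Finset.univ.sup' Finset.univ_nonempty v, ?_⟩
    have : (Finset.univ.filter fun i => v i ≤ Finset.univ.sup' Finset.univ_nonempty v)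
        = Finset.univ := by
      apply Finset.filter_true_of_mem
      intro i _
      exact Finset.le_sup' v (Finset.mem_univ i)
    simp only [hS, Set.mem_setOf_eq, this, Finset.card_univ, Fintype.card_fin]
    exact hKN
  -- from any element of S, we can find a smaller element of S in the range of v
  have key : ∀ x ∈ S, ∃ i : Fin N, v i ∈ S ∧ v i ≤ x := by
    intro x hx
    have hfil : (Finset.univ.filter fun i => v i ≤ x).Nonempty := by
      rw [← Finset.card_pos]
      exact lt_of_lt_of_le hK hx
    have himg : ((Finset.univ.filter fun i => v i ≤ x).image v).Nonempty :=
      hfil.image v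
    obtain ⟨i₀, hi₀mem, hi₀⟩ := Finset.mem_image.1 (Finset.max'_mem _ himg)
    refine ⟨i₀, ?_, ?_⟩
    · have hsub : (Finset.univ.filter fun i => v i ≤ x)
          ⊆ (Finset.univ.filter fun i => v i ≤ v i₀) := by
        intro i hi
        simp only [Finset.mem_filter, Finset.mem_univ, true_and] at hi ⊢
        rw [hi₀]
        exact Finset.le_max' _ _ (Finset.mem_image_of_mem v
          (by simp only [Finset.mem_filter, Finset.mem_univ, true_and]; exact hi))
      exact le_trans hx (Finset.card_le_card hsub)
    · simp only [Finset.mem_filter, Finset.mem_univ, true_and] at hi₀mem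
      exact hi₀mem
  have hbdd : BddBelow S := by
    refine ⟨Finset.univ.inf' Finset.univ_nonempty v, ?_⟩
    intro x hx
    obtain ⟨i, _, hle⟩ := key x hx
    exact le_trans (Finset.inf'_le v (Finset.mem_univ i)) hle
  -- the minimum of S is attained at some v i
  classical
  have hW : ∃ i : Fin N, v i ∈ S ∧ ∀ x ∈ S, v i ≤ x := by
    obtain ⟨x₀, hx₀⟩ := hne
    set W : Finset (Fin N) := Finset.univ.filter (fun i => v i ∈ S) with hWdef
    have hWne : W.Nonempty := by
      obtain ⟨i, hi, _⟩ := key x₀ hx₀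
      exact ⟨i, by simp [hWdef, hi]⟩
    have himg : (W.image v).Nonempty := hWne.image v
    obtain ⟨i₀, hi₀mem, hi₀⟩ := Finset.mem_image.1 (Finset.min'_mem _ himg)
    simp only [hWdef, Finset.mem_filter, Finset.mem_univ, true_and] at hi₀mem
    refine ⟨i₀, hi₀mem, ?_⟩
    intro x hx
    obtain ⟨j, hj, hjle⟩ := key x hx
    have : v i₀ ≤ v j := by
      rw [hi₀]
      exact Finset.min'_le _ _ (Finset.mem_image_of_mem v (by simp [hWdef, hj]))
    exact this.trans hjle
  obtain ⟨i, hiS, hmin⟩ := hW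
  have hsInf : F K v = v i := by
    rw [F_def, ← hS]
    exact le_antisymm (csInf_le hbdd hiS) (le_csInf hne hmin)
  constructor
  · rw [hsInf]; exact hiS
  · intro x hx
    rw [hsInf]
    exact hmin x hx

lemma F_le_iff (hK : 1 ≤ K) (hKN : K ≤ N) (v : Fin N → ℝ) (t : ℝ) :
    F K v ≤ t ↔ K ≤ (Finset.univ.filter fun i => v i ≤ t).card := by
  obtain ⟨hmem, hlb⟩ := sInf_mem_S (K := K) (N := N) hK hKN v
  constructor
  · intro h
    exact le_trans hmem (cardLe_mono v h)
  · intro h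
    exact hlb t h

lemma F_lt_iff (hK : 1 ≤ K) (hKN : K ≤ N) (v : Fin N → ℝ) (t : ℝ) :
    F K v < t ↔ K ≤ (Finset.univ.filter fun i => v i < t).card := by
  obtain ⟨hmem, hlb⟩ := sInf_mem_S (K := K) (N := N) hK hKN v
  constructor
  · intro h
    refine le_trans hmem (Finset.card_le_card ?_)
    intro i hi
    simp only [Finset.mem_filter, Finset.mem_univ, true_and] at hi ⊢
    exact lt_of_le_of_lt hi h
  · intro h
    have hfil : (Finset.univ.filter fun i => v i < t).Nonempty := by
      rw [← Finset.card_pos]; exact lt_of_lt_of_le hK h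
    have himg : ((Finset.univ.filter fun i => v i < t).image v).Nonempty := hfil.image v
    set y := ((Finset.univ.filter fun i => v i < t).image v).max' himg with hy
    obtain ⟨i₀, hi₀mem, hi₀⟩ := Finset.mem_image.1 (Finset.max'_mem _ himg)
    simp only [Finset.mem_filter, Finset.mem_univ, true_and] at hi₀mem
    have hyt : y < t := by rw [hy, ← hi₀]; exact hi₀mem
    have : F K v ≤ y := by
      rw [F_le_iff hK hKN]
      refine le_trans h (Finset.card_le_card ?_)
      intro i hi
      simp only [Finset.mem_filter, Finset.mem_univ, true_and] at hi ⊢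
      exact Finset.le_max' _ _ (Finset.mem_image_of_mem v
        (by simp only [Finset.mem_filter, Finset.mem_univ, true_and]; exact hi))
    exact lt_of_le_of_lt this hyt

lemma rnk_pos (v : Fin N → ℝ) (n : Fin N) : 1 ≤ rnk v n := by
  exact Finset.card_pos.mpr ⟨n, by simp⟩

lemma rnk_le (v : Fin N → ℝ) (n : Fin N) : rnk v n ≤ N := by
  calc rnk v n ≤ Finset.univ.card := Finset.card_filter_le _ _
  _ = N := by simp

lemma card_lt_add_one (v : Fin N → ℝ) (hinj : Function.Injective v) (n : Fin N) :
    (Finset.univ.filter fun i => v i < v n).card + 1 = rnk v n := by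
  classical
  have : (Finset.univ.filter fun i => v i ≤ v n)
      = insert n (Finset.univ.filter fun i => v i < v n) := by
    ext i
    simp only [Finset.mem_filter, Finset.mem_univ, true_and, Finset.mem_insert]
    constructor
    · intro h
      rcases eq_or_lt_of_le h with h' | h'
      · exact Or.inl (hinj h')
      · exact Or.inr h'
    · rintro (rfl | h)
      · exact le_rfl
      · exact le_of_lt h
  rw [rnk, this, Finset.card_insert_of_notMem (by simp)]

lemma le_F_iff (hK : 1 ≤ K) (hKN : K ≤ N) (v : Fin N → ℝ) (hinj : Function.Injective v) (n : Fin N) :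
    v n ≤ F K v ↔ rnk v n ≤ K := by
  rw [← not_lt, F_lt_iff hK hKN, ← card_lt_add_one v hinj n]
  omega

lemma F_eq_of_rnk {h : ℕ} (hh : 1 ≤ h) (hhN : h ≤ N) (v : Fin N → ℝ)
    (hinj : Function.Injective v) (n : Fin N) (hr : rnk v n = h) :
    F h v = v n := by
  refine le_antisymm ?_ ?_
  · rw [F_le_iff hh hhN, ← rnk, hr]
  · rw [le_F_iff hh hhN v hinj, hr]

lemma rnk_injective (v : Fin N → ℝ) (hinj : Function.Injective v) :
    Function.Injective (rnk v) := by
  intro m n hmn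
  rcases lt_trichotomy (v m) (v n) with h | h | h
  · exfalso
    have : rnk v m < rnk v n := by
      apply Finset.card_lt_card
      constructor
      · intro i hi
        simp only [Finset.mem_filter, Finset.mem_univ, true_and] at hi ⊢
        exact hi.trans (le_of_lt h)
      · intro hsub
        have := hsub (by simp : n ∈ Finset.univ.filter fun i => v i ≤ v n)
        simp only [Finset.mem_filter, Finset.mem_univ, true_and] at this
        exact absurd this (not_le.2 h)
    omega
  · exact hinj h
  · exfalso
    have : rnk v n < rnk v m := by
      apply Finset.card_lt_card
      constructor
      · intro i hi
        simp only [Finset.mem_filter, Finset.mem_univ, true_and] at hi ⊢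
        exact hi.trans (le_of_lt h)
      · intro hsub
        have := hsub (by simp : m ∈ Finset.univ.filter fun i => v i ≤ v m)
        simp only [Finset.mem_filter, Finset.mem_univ, true_and] at this
        exact absurd this (not_le.2 h)
    omega

lemma rnk_surjective (v : Fin N → ℝ) (hinj : Function.Injective v) {h : ℕ}
    (hh : 1 ≤ h) (hhN : h ≤ N) : ∃ n, rnk v n = h := by
  classical
  have himg : Finset.univ.image (rnk v) = Finset.Icc 1 N := by
    apply Finset.eq_of_subset_of_card_le
    · intro x hx
      obtain ⟨i, _, rfl⟩ := Finset.mem_image.1 hx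
      exact Finset.mem_Icc.2 ⟨rnk_pos v i, rnk_le v i⟩
    · rw [Nat.card_Icc, Finset.card_image_of_injective _ (rnk_injective v hinj)]
      simp
  have : h ∈ Finset.univ.image (rnk v) := by
    rw [himg]; exact Finset.mem_Icc.2 ⟨hh, hhN⟩
  obtain ⟨n, _, hn⟩ := Finset.mem_image.1 this
  exact ⟨n, hn⟩

lemma F_comp (Kk : ℕ) (v : Fin N → ℝ) (σ : Equiv.Perm (Fin N)) :
    F Kk (v ∘ σ) = F Kk v := by
  rw [F_def, F_def]
  congr 1
  ext x
  simp only [Set.mem_setOf_eq, Function.comp_apply]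
  constructor <;> intro hx <;> refine le_trans hx (le_of_eq ?_)
  · exact Finset.card_equiv σ (fun i => by simp)
  · exact Finset.card_equiv σ.symm (fun i => by simp)

lemma rnk_comp (v : Fin N → ℝ) (σ : Equiv.Perm (Fin N)) (n : Fin N) :
    rnk (v ∘ σ) n = rnk v (σ n) := by
  rw [rnk, rnk]
  exact Finset.card_equiv σ (fun i => by simp)

end OSAux

namespace OSAux

section Meas

variable {N : ℕ}

lemma measurable_filter_card (g : Fin N → (Fin N → ℝ) → Prop)
    [∀ i v, Decidable (g i v)]
    (hg : ∀ i, MeasurableSet {v : Fin N → ℝ | g i v}) :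
    Measurable fun v : Fin N → ℝ => (Finset.univ.filter fun i => g i v).card := by
  have heq : (fun v : Fin N → ℝ => (Finset.univ.filter fun i => g i v).card)
      = fun v => ∑ i : Fin N, if g i v then 1 else 0 := by
    funext v
    exact Finset.card_filter _ _
  rw [heq]
  exact Finset.measurable_sum _ fun i _ =>
    Measurable.ite (hg i) measurable_const measurable_const

lemma measurable_F {K : ℕ} (hK : 1 ≤ K) (hKN : K ≤ N) :
    Measurable (F K : (Fin N → ℝ) → ℝ) := by
  apply measurable_of_Iic
  intro t
  have : (F K : (Fin N → ℝ) → ℝ) ⁻¹' Set.Iic t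
      = (fun v : Fin N → ℝ => (Finset.univ.filter fun i => v i ≤ t).card) ⁻¹' Set.Ici K := by
    ext v
    exact F_le_iff hK hKN v t
  rw [this]
  exact measurable_filter_card _
    (fun i => measurableSet_le (measurable_pi_apply i) measurable_const) trivial

lemma measurable_rnk (n : Fin N) : Measurable fun v : Fin N → ℝ => rnk v n :=
  measurable_filter_card _
    (fun i => measurableSet_le (measurable_pi_apply i) (measurable_pi_apply n))

lemma measurableSet_inj :
    MeasurableSet {v : Fin N → ℝ | Function.Injective v} := by
  have : {v : Fin N → ℝ | Function.Injective v}
      = ⋂ i, ⋂ j, {v : Fin N → ℝ | i = j ∨ v i ≠ v j} := by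
    ext v
    simp only [Set.mem_setOf_eq, Set.mem_iInter, Function.Injective]
    constructor
    · intro h i j
      by_cases hij : i = j
      · exact Or.inl hij
      · exact Or.inr fun he => hij (h he)
    · intro h a b hab
      rcases h a b with h' | h'
      · exact h'
      · exact absurd hab h'
  rw [this]
  refine MeasurableSet.iInter fun i => MeasurableSet.iInter fun j => ?_
  rcases eq_or_ne i j with rfl | hij
  · simp
  · have : {v : Fin N → ℝ | i = j ∨ v i ≠ v j} = {v : Fin N → ℝ | v i = v j}ᶜ := by
      ext v
      simp [hij]
    rw [this]
    exact (measurableSet_eq_fun (measurable_pi_apply i) (measurable_pi_apply j)).compl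

variable {μ : Measure ℝ} [IsProbabilityMeasure μ]

lemma diag_null (hμ : ∀ x : ℝ, μ {x} = 0) {i j : Fin N} (hij : i ≠ j) :
    Measure.pi (fun _ : Fin N => μ) {v | v i = v j} = 0 := by
  haveI : NullSingletonClass μ := ⟨hμ⟩
  obtain ⟨M, rfl⟩ := Nat.exists_eq_succ_of_ne_zero i.pos.ne'
  obtain ⟨k, hk⟩ := Fin.exists_succAbove_eq hij.symm
  set e := MeasurableEquiv.piFinSuccAbove (fun _ : Fin (M + 1) => ℝ) i with he
  have hmp := measurePreserving_piFinSuccAbove (fun _ : Fin (M + 1) => μ) i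
  have hsm : MeasurableSet {p : ℝ × (Fin M → ℝ) | p.1 = p.2 k} :=
    measurableSet_eq_fun measurable_fst ((measurable_pi_apply k).comp measurable_snd)
  have hset : {v : Fin (M + 1) → ℝ | v i = v j}
      = e ⁻¹' {p : ℝ × (Fin M → ℝ) | p.1 = p.2 k} := by
    ext v
    simp only [Set.mem_setOf_eq, Set.mem_preimage, he,
      MeasurableEquiv.piFinSuccAbove_apply]
    rw [← hk]
    rfl
  rw [hset, hmp.measure_preimage hsm.nullMeasurableSet]
  rw [Measure.prod_apply hsm]
  have : ∀ x : ℝ, (Measure.pi fun _ : Fin M => μ)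
      (Prod.mk x ⁻¹' {p : ℝ × (Fin M → ℝ) | p.1 = p.2 k}) = 0 := by
    intro x
    have : Prod.mk x ⁻¹' {p : ℝ × (Fin M → ℝ) | p.1 = p.2 k}
        = {w : Fin M → ℝ | w k = x} := by
      ext w
      simp [eq_comm]
    rw [this]
    exact Measure.pi_hyperplane (fun _ : Fin M => μ) k x
  simp only [this]
  simp

lemma injc_null (hμ : ∀ x : ℝ, μ {x} = 0) :
    Measure.pi (fun _ : Fin N => μ) {v | ¬ Function.Injective v} = 0 := by
  apply measure_mono_null
    (show {v : Fin N → ℝ | ¬ Function.Injective v}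
        ⊆ ⋃ i, ⋃ j, {v : Fin N → ℝ | i ≠ j ∧ v i = v j} from ?_)
  · rw [measure_iUnion_null_iff]
    intro i
    rw [measure_iUnion_null_iff]
    intro j
    rcases eq_or_ne i j with rfl | hij
    · simp
    · exact measure_mono_null (fun v hv => hv.2) (diag_null hμ hij)
  · intro v hv
    simp only [Set.mem_setOf_eq, Function.Injective, not_forall] at hv
    obtain ⟨a, b, hab, hne⟩ := hv
    simp only [Set.mem_iUnion, Set.mem_setOf_eq]
    exact ⟨a, b, hne, hab⟩

lemma perm_preserving (σ : Equiv.Perm (Fin N)) :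
    MeasurePreserving (fun v : Fin N → ℝ => v ∘ σ)
      (Measure.pi fun _ : Fin N => μ) (Measure.pi fun _ : Fin N => μ) := by
  have h := measurePreserving_piCongrLeft (fun _ : Fin N => μ) σ.symm
  have hcoe : ⇑(MeasurableEquiv.piCongrLeft (fun _ : Fin N => ℝ) σ.symm)
      = fun v : Fin N → ℝ => v ∘ σ := by
    funext v
    funext b
    have := Equiv.piCongrLeft_apply_apply (fun _ : Fin N => ℝ) σ.symm v (σ b)
    simp only [Equiv.symm_apply_apply] at this
    rw [MeasurableEquiv.coe_piCongrLeft]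
    simpa using this
  rw [hcoe] at h
  exact h

end Meas

end OSAux


open scoped ENNReal
open OSAux

theorem cond_prob_orderStat_before_deadline_given_success
    {Ω : Type*} [MeasurableSpace Ω] (P : MeasureTheory.Measure Ω) [IsProbabilityMeasure P]
    (N K : ℕ) (hK : 1 ≤ K) (hKN : K ≤ N)
    (μ ν : MeasureTheory.Measure ℝ) [IsProbabilityMeasure μ] [IsProbabilityMeasure ν]
    (hμ : ∀ x : ℝ, μ {x} = 0) (hν : ∀ x : ℝ, ν {x} = 0)
    (T : Fin N → Ω → ℝ) (hT : ∀ i, Measurable (T i)) (n : Fin N)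
    (D : Ω → ℝ) (hD : Measurable D)
    (hlaw : MeasureTheory.Measure.map (fun ω => (D ω, fun i => T i ω)) P
      = ν.prod (MeasureTheory.Measure.pi (fun _ : Fin N => μ)))
    (R : ℕ → ℝ) (hR : ∀ h, R h = (P {ω | orderStat T h ω ≤ D ω}).toReal) :
    ((P[|{ω | T n ω ≤ min (D ω) (orderStat T K ω)}]) {ω | orderStat T K ω < D ω}).toReal
      = (K : ℝ) * R K / ∑ h ∈ Finset.Icc 1 K, R h := by
  classical
  set S : Measure (Fin N → ℝ) := Measure.pi fun _ : Fin N => μ with hS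
  set Q : Measure (ℝ × (Fin N → ℝ)) := ν.prod S with hQ
  set φ : Ω → ℝ × (Fin N → ℝ) := fun ω => (D ω, fun i => T i ω) with hφdef
  have hφ : Measurable φ := hD.prodMk (measurable_pi_lambda _ hT)
  have hmap : ∀ {s : Set (ℝ × (Fin N → ℝ))}, MeasurableSet s → P (φ ⁻¹' s) = Q s := by
    intro s hs
    rw [← Measure.map_apply hφ hs, hφdef, hlaw]
  -- basic measurability facts
  have hFm : ∀ h : ℕ, 1 ≤ h → h ≤ N → Measurable (F h : (Fin N → ℝ) → ℝ) :=
    fun h hh hhN => measurable_F hh hhN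
  have hInjm : MeasurableSet {p : ℝ × (Fin N → ℝ) | Function.Injective p.2} :=
    measurable_snd measurableSet_inj
  have hinjc : Q {p : ℝ × (Fin N → ℝ) | ¬ Function.Injective p.2} = 0 := by
    have : {p : ℝ × (Fin N → ℝ) | ¬ Function.Injective p.2}
        = Set.univ ×ˢ {v : Fin N → ℝ | ¬ Function.Injective v} := by
      ext p; simp [Set.mem_prod]
    rw [hQ, this, Measure.prod_prod, injc_null hμ, mul_zero]
  -- the events in coordinates
  set E : ℕ → Fin N → Set (ℝ × (Fin N → ℝ)) := fun h m =>
    {p | Function.Injective p.2 ∧ rnk p.2 m = h ∧ F K p.2 < p.1} with hE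
  set E' : ℕ → Fin N → Set (ℝ × (Fin N → ℝ)) := fun h m =>
    {p | Function.Injective p.2 ∧ rnk p.2 m = h ∧ p.2 m ≤ p.1} with hE'
  set C : ℕ → Set (ℝ × (Fin N → ℝ)) := fun h =>
    {p | Function.Injective p.2 ∧ F h p.2 ≤ p.1} with hC
  set Cs : Set (ℝ × (Fin N → ℝ)) :=
    {p | Function.Injective p.2 ∧ F K p.2 < p.1} with hCs
  have hrnkm : ∀ (h : ℕ) (m : Fin N),
      MeasurableSet {p : ℝ × (Fin N → ℝ) | rnk p.2 m = h} :=
    fun h m => ((measurable_rnk m).comp measurable_snd) (measurableSet_singleton h)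
  have hEm : ∀ (h : ℕ) (m : Fin N), MeasurableSet (E h m) := by
    intro h m
    exact hInjm.inter ((hrnkm h m).inter
      (measurableSet_lt ((hFm K hK hKN).comp measurable_snd) measurable_fst))
  have hE'm : ∀ (h : ℕ) (m : Fin N), MeasurableSet (E' h m) := by
    intro h m
    exact hInjm.inter ((hrnkm h m).inter
      (measurableSet_le (show Measurable fun p : ℝ × (Fin N → ℝ) => p.2 m from
        (measurable_pi_apply m).comp measurable_snd) measurable_fst))
  have hCm : ∀ h : ℕ, 1 ≤ h → h ≤ N → MeasurableSet (C h) := by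
    intro h hh hhN
    exact hInjm.inter
      (measurableSet_le ((hFm h hh hhN).comp measurable_snd) measurable_fst)
  have hCsm : MeasurableSet Cs :=
    hInjm.inter (measurableSet_lt ((hFm K hK hKN).comp measurable_snd) measurable_fst)
  -- symmetry in the index m
  have hmpσ : ∀ σ : Equiv.Perm (Fin N),
      MeasurePreserving (Prod.map id (· ∘ σ)) Q Q :=
    fun σ => (MeasurePreserving.id ν).prod (perm_preserving σ)
  have hswap : ∀ (h : ℕ) (m m' : Fin N), Q (E h m) = Q (E h m') := by
    intro h m m'
    set σ := Equiv.swap m m' with hσ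
    have hpre : Prod.map id (· ∘ σ) ⁻¹' (E h m) = E h m' := by
      ext p
      simp only [hE, Set.mem_preimage, Prod.map_fst, Prod.map_snd, id_eq, Set.mem_setOf_eq]
      rw [Equiv.injective_comp, rnk_comp, F_comp, hσ, Equiv.swap_apply_left]
    rw [← hpre, (hmpσ σ).measure_preimage (hEm h m).nullMeasurableSet]
  have hswap' : ∀ (h : ℕ) (m m' : Fin N), Q (E' h m) = Q (E' h m') := by
    intro h m m'
    set σ := Equiv.swap m m' with hσ
    have hpre : Prod.map id (· ∘ σ) ⁻¹' (E' h m) = E' h m' := by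
      ext p
      simp only [hE', Set.mem_preimage, Prod.map_fst, Prod.map_snd, id_eq, Set.mem_setOf_eq,
        Function.comp_apply]
      rw [Equiv.injective_comp, rnk_comp, hσ, Equiv.swap_apply_left]
    rw [← hpre, (hmpσ σ).measure_preimage (hE'm h m).nullMeasurableSet]
  -- partition sums
  have hNonempty : Nonempty (Fin N) := ⟨⟨0, lt_of_lt_of_le hK hKN⟩⟩
  have hdisj : ∀ h : ℕ, Pairwise (Function.onFun Disjoint (E h)) := by
    intro h m m' hmm'
    rw [Function.onFun, Set.disjoint_left]
    rintro p ⟨hi, hr, -⟩ ⟨_, hr', -⟩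
    exact hmm' (rnk_injective _ hi (hr.trans hr'.symm))
  have hdisj' : ∀ h : ℕ, Pairwise (Function.onFun Disjoint (E' h)) := by
    intro h m m' hmm'
    rw [Function.onFun, Set.disjoint_left]
    rintro p ⟨hi, hr, -⟩ ⟨_, hr', -⟩
    exact hmm' (rnk_injective _ hi (hr.trans hr'.symm))
  have hsumE : ∀ h : ℕ, 1 ≤ h → h ≤ N → (N : ℝ≥0∞) * Q (E h n) = Q Cs := by
    intro h hh hhN
    have hunion : (⋃ m, E h m) = Cs := by
      ext p
      simp only [hE, hCs, Set.mem_iUnion, Set.mem_setOf_eq]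
      constructor
      · rintro ⟨m, hi, -, hlt⟩
        exact ⟨hi, hlt⟩
      · rintro ⟨hi, hlt⟩
        obtain ⟨m, hm⟩ := rnk_surjective _ hi hh hhN
        exact ⟨m, hi, hm, hlt⟩
    have := measure_iUnion (μ := Q) (hdisj h) (fun m => hEm h m)
    rw [hunion, tsum_fintype] at this
    rw [this]
    have : ∀ m : Fin N, Q (E h m) = Q (E h n) := fun m => hswap h m n
    rw [Finset.sum_congr rfl (fun m _ => this m), Finset.sum_const, Finset.card_univ,
      Fintype.card_fin, nsmul_eq_mul]
  have hsumE' : ∀ h : ℕ, 1 ≤ h → h ≤ N → (N : ℝ≥0∞) * Q (E' h n) = Q (C h) := by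
    intro h hh hhN
    have hunion : (⋃ m, E' h m) = C h := by
      ext p
      simp only [hE', hC, Set.mem_iUnion, Set.mem_setOf_eq]
      constructor
      · rintro ⟨m, hi, hr, hle⟩
        exact ⟨hi, by rw [F_eq_of_rnk hh hhN _ hi m hr]; exact hle⟩
      · rintro ⟨hi, hle⟩
        obtain ⟨m, hm⟩ := rnk_surjective _ hi hh hhN
        exact ⟨m, hi, hm, by rw [← F_eq_of_rnk hh hhN _ hi m hm]; exact hle⟩
    have := measure_iUnion (μ := Q) (hdisj' h) (fun m => hE'm h m)
    rw [hunion, tsum_fintype] at this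
    rw [this]
    have : ∀ m : Fin N, Q (E' h m) = Q (E' h n) := fun m => hswap' h m n
    rw [Finset.sum_congr rfl (fun m _ => this m), Finset.sum_const, Finset.card_univ,
      Fintype.card_fin, nsmul_eq_mul]
  -- boundary has measure zero
  have hbd : Q {p : ℝ × (Fin N → ℝ) | F K p.2 = p.1} = 0 := by
    have hms : MeasurableSet {p : ℝ × (Fin N → ℝ) | F K p.2 = p.1} :=
      measurableSet_eq_fun ((hFm K hK hKN).comp measurable_snd) measurable_fst
    rw [hQ, Measure.prod_apply_symm hms]
    have : ∀ v : Fin N → ℝ,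
        ν ((fun x => (x, v)) ⁻¹' {p : ℝ × (Fin N → ℝ) | F K p.2 = p.1}) = 0 := by
      intro v
      have : ((fun x => (x, v)) ⁻¹' {p : ℝ × (Fin N → ℝ) | F K p.2 = p.1})
          = {F K v} := by
        ext x
        simp [eq_comm]
      rw [this]
      exact hν _
    simp only [this]
    simp
  have hCsCK : Q Cs = Q (C K) := by
    refine le_antisymm (measure_mono fun p hp => ⟨hp.1, le_of_lt hp.2⟩) ?_
    have hsub : C K ⊆ Cs ∪ {p : ℝ × (Fin N → ℝ) | F K p.2 = p.1} := by
      rintro p ⟨hi, hle⟩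
      rcases lt_or_eq_of_le hle with h' | h'
      · exact Or.inl ⟨hi, h'⟩
      · exact Or.inr h'
    calc Q (C K) ≤ Q (Cs ∪ {p : ℝ × (Fin N → ℝ) | F K p.2 = p.1}) := measure_mono hsub
    _ ≤ Q Cs + Q {p : ℝ × (Fin N → ℝ) | F K p.2 = p.1} := measure_union_le _ _
    _ = Q Cs := by rw [hbd, add_zero]
  -- transfer to P
  have hord : ∀ (h : ℕ) (ω : Ω), orderStat T h ω = F h (fun i => T i ω) := fun _ _ => rfl
  have hRQ : ∀ h : ℕ, 1 ≤ h → h ≤ N →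
      P {ω | orderStat T h ω ≤ D ω} = Q (C h) := by
    intro h hh hhN
    have hsm : MeasurableSet {p : ℝ × (Fin N → ℝ) | F h p.2 ≤ p.1} :=
      measurableSet_le ((hFm h hh hhN).comp measurable_snd) measurable_fst
    have hpre : {ω | orderStat T h ω ≤ D ω}
        = φ ⁻¹' {p : ℝ × (Fin N → ℝ) | F h p.2 ≤ p.1} := by
      ext ω
      simp [hφdef, hord h ω]
    rw [hpre, hmap hsm]
    refine le_antisymm ?_ (measure_mono fun p hp => hp.2)
    calc Q {p : ℝ × (Fin N → ℝ) | F h p.2 ≤ p.1}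
        ≤ Q (C h ∪ {p : ℝ × (Fin N → ℝ) | ¬ Function.Injective p.2}) := by
          refine measure_mono fun p hp => ?_
          by_cases hi : Function.Injective p.2
          · exact Or.inl ⟨hi, hp⟩
          · exact Or.inr hi
    _ ≤ Q (C h) + Q {p : ℝ × (Fin N → ℝ) | ¬ Function.Injective p.2} :=
          measure_union_le _ _
    _ = Q (C h) := by rw [hinjc, add_zero]
  -- the success event A and the target event B
  set A : Set Ω := {ω | T n ω ≤ min (D ω) (orderStat T K ω)} with hA
  set B : Set Ω := {ω | orderStat T K ω < D ω} with hB
  have hevaln : Measurable fun p : ℝ × (Fin N → ℝ) => p.2 n :=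
    (measurable_pi_apply n).comp measurable_snd
  have hsA : MeasurableSet {p : ℝ × (Fin N → ℝ) | p.2 n ≤ min p.1 (F K p.2)} :=
    measurableSet_le hevaln
      (measurable_fst.min ((hFm K hK hKN).comp measurable_snd))
  have hsAB : MeasurableSet {p : ℝ × (Fin N → ℝ) |
      p.2 n ≤ min p.1 (F K p.2) ∧ F K p.2 < p.1} :=
    hsA.inter (measurableSet_lt ((hFm K hK hKN).comp measurable_snd) measurable_fst)
  have hAm : MeasurableSet A := by
    have : A = φ ⁻¹' {p : ℝ × (Fin N → ℝ) | p.2 n ≤ min p.1 (F K p.2)} := by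
      ext ω; simp [hA, hφdef, hord K ω]
    rw [this]; exact hφ hsA
  -- P A
  have hPA : (N : ℝ≥0∞) * P A = ∑ h ∈ Finset.Icc 1 K, Q (C h) := by
    have hApre : A = φ ⁻¹' {p : ℝ × (Fin N → ℝ) | p.2 n ≤ min p.1 (F K p.2)} := by
      ext ω; simp [hA, hφdef, hord K ω]
    have hU : Q {p : ℝ × (Fin N → ℝ) | p.2 n ≤ min p.1 (F K p.2)}
        = Q (⋃ h ∈ Finset.Icc 1 K, E' h n) := by
      refine le_antisymm ?_ (measure_mono ?_)
      · calc Q {p : ℝ × (Fin N → ℝ) | p.2 n ≤ min p.1 (F K p.2)}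
            ≤ Q ((⋃ h ∈ Finset.Icc 1 K, E' h n)
              ∪ {p : ℝ × (Fin N → ℝ) | ¬ Function.Injective p.2}) := by
              refine measure_mono fun p hp => ?_
              by_cases hi : Function.Injective p.2
              · left
                simp only [Set.mem_setOf_eq, le_min_iff] at hp
                have hrle : rnk p.2 n ≤ K :=
                  (le_F_iff hK hKN _ hi n).1 hp.2
                refine Set.mem_biUnion (Finset.mem_Icc.2 ⟨rnk_pos p.2 n, hrle⟩) ?_
                exact ⟨hi, rfl, hp.1⟩
              · exact Or.inr hi
        _ ≤ Q (⋃ h ∈ Finset.Icc 1 K, E' h n)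
              + Q {p : ℝ × (Fin N → ℝ) | ¬ Function.Injective p.2} := measure_union_le _ _
        _ = Q (⋃ h ∈ Finset.Icc 1 K, E' h n) := by rw [hinjc, add_zero]
      · intro p hp
        simp only [Set.mem_iUnion] at hp
        obtain ⟨h, hh, hi, hr, hle⟩ := hp
        rw [Finset.mem_Icc] at hh
        have : p.2 n ≤ F K p.2 :=
          (le_F_iff hK hKN _ hi n).2 (by rw [hr]; exact hh.2)
        exact le_min hle this
    have hQU : Q (⋃ h ∈ Finset.Icc 1 K, E' h n) = ∑ h ∈ Finset.Icc 1 K, Q (E' h n) := by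
      refine measure_biUnion_finset ?_ (fun h _ => hE'm h n)
      intro h _ h' _ hhh'
      rw [Function.onFun, Set.disjoint_left]
      rintro p ⟨_, hr, -⟩ ⟨_, hr', -⟩
      exact hhh' (hr.symm.trans hr')
    rw [hApre, hmap hsA, hU, hQU, Finset.mul_sum]
    refine Finset.sum_congr rfl fun h hh => ?_
    rw [Finset.mem_Icc] at hh
    exact hsumE' h hh.1 (hh.2.trans hKN)
  -- P (A ∩ B)
  have hPAB : (N : ℝ≥0∞) * P (A ∩ B) = (K : ℝ≥0∞) * Q (C K) := by
    have hABpre : A ∩ B = φ ⁻¹' {p : ℝ × (Fin N → ℝ) |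
        p.2 n ≤ min p.1 (F K p.2) ∧ F K p.2 < p.1} := by
      ext ω
      simp [hA, hB, hφdef, hord K ω, Set.mem_inter_iff]
    have hU : Q {p : ℝ × (Fin N → ℝ) | p.2 n ≤ min p.1 (F K p.2) ∧ F K p.2 < p.1}
        = Q (⋃ h ∈ Finset.Icc 1 K, E h n) := by
      refine le_antisymm ?_ (measure_mono ?_)
      · calc Q {p : ℝ × (Fin N → ℝ) | p.2 n ≤ min p.1 (F K p.2) ∧ F K p.2 < p.1}
            ≤ Q ((⋃ h ∈ Finset.Icc 1 K, E h n)
              ∪ {p : ℝ × (Fin N → ℝ) | ¬ Function.Injective p.2}) := by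
              refine measure_mono fun p hp => ?_
              by_cases hi : Function.Injective p.2
              · left
                simp only [Set.mem_setOf_eq, le_min_iff] at hp
                have hrle : rnk p.2 n ≤ K :=
                  (le_F_iff hK hKN _ hi n).1 hp.1.2
                refine Set.mem_biUnion (Finset.mem_Icc.2 ⟨rnk_pos p.2 n, hrle⟩) ?_
                exact ⟨hi, rfl, hp.2⟩
              · exact Or.inr hi
        _ ≤ Q (⋃ h ∈ Finset.Icc 1 K, E h n)
              + Q {p : ℝ × (Fin N → ℝ) | ¬ Function.Injective p.2} := measure_union_le _ _
        _ = Q (⋃ h ∈ Finset.Icc 1 K, E h n) := by rw [hinjc, add_zero]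
      · intro p hp
        simp only [Set.mem_iUnion] at hp
        obtain ⟨h, hh, hi, hr, hlt⟩ := hp
        rw [Finset.mem_Icc] at hh
        have h1 : p.2 n ≤ F K p.2 :=
          (le_F_iff hK hKN _ hi n).2 (by rw [hr]; exact hh.2)
        exact ⟨le_min (h1.trans (le_of_lt hlt)) h1, hlt⟩
    have hQU2 : Q (⋃ h ∈ Finset.Icc 1 K, E h n) = ∑ h ∈ Finset.Icc 1 K, Q (E h n) := by
      refine measure_biUnion_finset ?_ (fun h _ => hEm h n)
      intro h _ h' _ hhh'
      rw [Function.onFun, Set.disjoint_left]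
      rintro p ⟨_, hr, -⟩ ⟨_, hr', -⟩
      exact hhh' (hr.symm.trans hr')
    rw [hABpre, hmap hsAB, hU, hQU2, Finset.mul_sum]
    have : ∀ h ∈ Finset.Icc 1 K, (N : ℝ≥0∞) * Q (E h n) = Q (C K) := by
      intro h hh
      rw [Finset.mem_Icc] at hh
      rw [hsumE h hh.1 (hh.2.trans hKN), hCsCK]
    rw [Finset.sum_congr rfl this, Finset.sum_const, Nat.card_Icc]
    simp [nsmul_eq_mul]
  -- conclusion
  have hcond := ProbabilityTheory.cond_apply hAm P B
  have hRC : ∀ h : ℕ, 1 ≤ h → h ≤ N → R h = (Q (C h)).toReal := by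
    intro h hh hhN
    rw [hR h, hRQ h hh hhN]
  have hfin : ∀ s, Q s ≠ ∞ := fun s => measure_ne_top Q s
  have hsumR : ∑ h ∈ Finset.Icc 1 K, R h
      = (∑ h ∈ Finset.Icc 1 K, Q (C h)).toReal := by
    rw [ENNReal.toReal_sum (fun h _ => hfin (C h))]
    refine Finset.sum_congr rfl fun h hh => ?_
    rw [Finset.mem_Icc] at hh
    exact hRC h hh.1 (hh.2.trans hKN)
  by_cases hPA0 : P A = 0
  · have hPAB0 : P (A ∩ B) = 0 :=
      le_antisymm (le_trans (measure_mono Set.inter_subset_left) (le_of_eq hPA0)) zero_le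
    rw [hcond, hPAB0, mul_zero, ENNReal.toReal_zero]
    have hsum0 : ∑ h ∈ Finset.Icc 1 K, Q (C h) = 0 := by
      rw [← hPA, hPA0, mul_zero]
    have hCK0 : Q (C K) = 0 := by
      have := (Finset.sum_eq_zero_iff).1 hsum0 K (Finset.mem_Icc.2 ⟨hK, le_refl K⟩)
      exact this
    have : R K = 0 := by rw [hRC K hK hKN, hCK0, ENNReal.toReal_zero]
    rw [this, mul_zero, zero_div]
  · -- nondegenerate case
    have hN0 : (N : ℝ) ≠ 0 := by
      have : 0 < N := lt_of_lt_of_le hK hKN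
      exact_mod_cast this.ne'
    have hPAfin : P A ≠ ∞ := measure_ne_top P A
    have hPABfin : P (A ∩ B) ≠ ∞ := measure_ne_top P _
    have haR : (N : ℝ) * (P A).toReal = ∑ h ∈ Finset.Icc 1 K, R h := by
      rw [hsumR, ← hPA, ENNReal.toReal_mul, ENNReal.toReal_natCast]
    have hbR : (N : ℝ) * (P (A ∩ B)).toReal = (K : ℝ) * R K := by
      rw [hRC K hK hKN, ← ENNReal.toReal_natCast (n := K), ← ENNReal.toReal_mul, ← hPAB,
        ENNReal.toReal_mul, ENNReal.toReal_natCast]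
    rw [hcond, ENNReal.toReal_mul, ENNReal.toReal_inv]
    rw [← haR, ← hbR, mul_div_mul_left _ _ hN0]
    rw [div_eq_inv_mul]
end
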